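/- Let λ, μ be real numbers with λμ = κ for a constant κ > 1, λ < 0, μ < 0, and set t = arctanh(1/√κ) (well-defined since κ > 1). Then (λ - tanh t)/(1 - λ tanh t) + (μ - tanh t)/(1 - μ tanh t) = -(κ + 1)/√κ. In particular, the sum depends only on κ. -/

import Mathlib

/-- The inverse hyperbolic tangent, `arctanh x = (1/2) log((1+x)/(1-x))`. -/
noncomputable def arctanh (x : ℝ) : ℝ := (1 / 2) * Real.log ((1 + x) / (1 - x))

lemma tanh_arctanh {x : ℝ} (h0 : 0 < x) (h1 : x < 1) :
    Real.tanh (arctanh x) = x := by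
  set u : ℝ := (1 + x) / (1 - x) with hu_def
  have hu : (0:ℝ) < u := by
    apply div_pos <;> linarith
  have hs : (0:ℝ) < Real.sqrt u := Real.sqrt_pos.2 hu
  have hexp : Real.exp (arctanh x) = Real.sqrt u := by
    rw [arctanh, mul_comm, Real.exp_mul, Real.exp_log hu, ← Real.sqrt_eq_rpow]
  have hsq : Real.sqrt u ^ 2 = u := Real.sq_sqrt hu.le
  rw [Real.tanh_eq_sinh_div_cosh, Real.sinh_eq, Real.cosh_eq, Real.exp_neg, hexp]
  have h1x : (1:ℝ) - x ≠ 0 := by linarith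
  have hu_eq : u * (1 - x) = 1 + x := by
    rw [hu_def, div_mul_cancel₀ _ h1x]
  rw [div_eq_iff (by positivity)]
  field_simp
  nlinarith [hsq, hu_eq]

theorem stmt2 (lam mu κ : ℝ) (hlam : lam < 0) (hmu : mu < 0) (hκ : 1 < κ)
    (hprod : lam * mu = κ) :
    (lam - Real.tanh (arctanh (1 / Real.sqrt κ))) /
        (1 - lam * Real.tanh (arctanh (1 / Real.sqrt κ))) +
      (mu - Real.tanh (arctanh (1 / Real.sqrt κ))) /
        (1 - mu * Real.tanh (arctanh (1 / Real.sqrt κ))) =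
      -((κ + 1) / Real.sqrt κ) := by
  have hκ0 : (0:ℝ) < κ := by linarith
  have hs : (1:ℝ) < Real.sqrt κ := by
    by_contra h
    push_neg at h
    nlinarith [Real.sq_sqrt hκ0.le, Real.sqrt_nonneg κ]
  have hs0 : (0:ℝ) < Real.sqrt κ := by linarith
  have hx0 : (0:ℝ) < 1 / Real.sqrt κ := by positivity
  have hx1 : 1 / Real.sqrt κ < 1 := by
    rw [div_lt_one hs0]; exact hs
  rw [tanh_arctanh hx0 hx1]
  set s := Real.sqrt κ with hs_def
  have hsq : s ^ 2 = κ := Real.sq_sqrt hκ0.le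
  have hd1 : 1 - lam * (1 / s) > 0 := by
    have : lam * (1 / s) < 0 := mul_neg_of_neg_of_pos hlam hx0
    linarith
  have hd2 : 1 - mu * (1 / s) > 0 := by
    have : mu * (1 / s) < 0 := mul_neg_of_neg_of_pos hmu hx0
    linarith
  have ha : s - lam > 0 := by linarith
  have hb : s - mu > 0 := by linarith
  rw [← hsq] at hprod ⊢
  field_simp
  ring_nf
  linear_combination (1 - s ^ 2) * hprod
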